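/- Let H = (H^A ⊗ H^B) ⊕ K with dim H^A = m, and let Γ' : B(H) → B(H) be the quantum operation with Kraus operators {(1/√m) P_kl : 1 ≤ k, l ≤ m} ∪ {P_𝔄^⊥}, where P_𝔄^⊥ is the projection onto K. Suppose T : B(H) → B(H) is a linear map that is trace preserving on operators supported on H^A ⊗ H^B and satisfies: for every σ^B ∈ B(H^B) there exists τ^A ∈ B(H^A) with T(1^A ⊗ σ^B) = τ^A ⊗ σ^B. Then (Γ' ∘ T)(1^A ⊗ σ^B) = 1^A ⊗ σ^B for all σ^B ∈ B(H^B). -/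

import Mathlib

open scoped Kronecker Matrix

noncomputable section

abbrev HIdx (m n p : ℕ) : Type := (Fin m × Fin n) ⊕ Fin p

def embed {m n p : ℕ} (M : Matrix (Fin m × Fin n) (Fin m × Fin n) ℂ) :
    Matrix (HIdx m n p) (HIdx m n p) ℂ :=
  Matrix.fromBlocks M 0 0 0

def PA (m n p : ℕ) : Matrix (HIdx m n p) (HIdx m n p) ℂ :=
  embed 1

def Pmu {m : ℕ} (n p : ℕ) (k l : Fin m) : Matrix (HIdx m n p) (HIdx m n p) ℂ :=
  embed (Matrix.single k l (1 : ℂ) ⊗ₖ (1 : Matrix (Fin n) (Fin n) ℂ))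

def trA {m n p : ℕ} (M : Matrix (HIdx m n p) (HIdx m n p) ℂ) :
    Matrix (Fin n) (Fin n) ℂ :=
  Matrix.of fun i j => ∑ k : Fin m, M (Sum.inl (k, i)) (Sum.inl (k, j))

def IsQuantumOperation {d : Type} [Fintype d] [DecidableEq d]
    (E : Matrix d d ℂ →ₗ[ℂ] Matrix d d ℂ) : Prop :=
  ∃ (ι : Type) (_ : Fintype ι) (K : ι → Matrix d d ℂ),
    (∀ ρ, E ρ = ∑ a, K a * ρ * (K a)ᴴ) ∧ ∑ a, (K a)ᴴ * K a = 1

/-- `P_𝔄^⊥`, the orthogonal projection of `H` onto `K`. -/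
def PAperp (m n p : ℕ) : Matrix (HIdx m n p) (HIdx m n p) ℂ :=
  Matrix.fromBlocks 0 0 0 1

lemma embed_mul {m n p : ℕ} (A B : Matrix (Fin m × Fin n) (Fin m × Fin n) ℂ) :
    (embed A : Matrix (HIdx m n p) _ _) * embed B = embed (A * B) := by
  simp [embed, Matrix.fromBlocks_multiply]

lemma embed_add {m n p : ℕ} (A B : Matrix (Fin m × Fin n) (Fin m × Fin n) ℂ) :
    (embed (A + B) : Matrix (HIdx m n p) _ _) = embed A + embed B := by
  simp [embed, Matrix.fromBlocks_add]

lemma embed_smul {m n p : ℕ} (c : ℂ) (A : Matrix (Fin m × Fin n) (Fin m × Fin n) ℂ) :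
    (embed (c • A) : Matrix (HIdx m n p) _ _) = c • embed A := by
  simp [embed, Matrix.fromBlocks_smul]

lemma embed_conjTranspose {m n p : ℕ} (A : Matrix (Fin m × Fin n) (Fin m × Fin n) ℂ) :
    (embed A : Matrix (HIdx m n p) _ _)ᴴ = embed Aᴴ := by
  simp [embed, Matrix.fromBlocks_conjTranspose]

lemma embed_sum {m n p : ℕ} {ι : Type*} (s : Finset ι)
    (f : ι → Matrix (Fin m × Fin n) (Fin m × Fin n) ℂ) :
    (embed (∑ i ∈ s, f i) : Matrix (HIdx m n p) _ _) = ∑ i ∈ s, embed (f i) := by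
  ext (i | i) (j | j) <;> simp [embed, Matrix.sum_apply]

lemma embed_inj {m n p : ℕ} {A B : Matrix (Fin m × Fin n) (Fin m × Fin n) ℂ}
    (h : (embed A : Matrix (HIdx m n p) _ _) = embed B) : A = B := by
  ext i j
  have := congrFun (congrFun h (Sum.inl i)) (Sum.inl j)
  simpa [embed] using this

lemma trace_embed {m n p : ℕ} (A : Matrix (Fin m × Fin n) (Fin m × Fin n) ℂ) :
    (embed A : Matrix (HIdx m n p) _ _).trace = A.trace := by
  simp [embed, Matrix.trace, Matrix.diag, Fintype.sum_sum_type]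

lemma embed_of_empty {m n p : ℕ} [IsEmpty (Fin m × Fin n)]
    (M : Matrix (Fin m × Fin n) (Fin m × Fin n) ℂ) :
    (embed M : Matrix (HIdx m n p) _ _) = 0 := by
  ext (i | i) (j | j)
  · exact (IsEmpty.false i).elim
  · exact (IsEmpty.false i).elim
  · simp [embed]
  · simp [embed]

lemma PAperp_mul_embed {m n p : ℕ} (M : Matrix (Fin m × Fin n) (Fin m × Fin n) ℂ) :
    PAperp m n p * embed M = 0 := by
  simp [PAperp, embed, Matrix.fromBlocks_multiply]

lemma sum_stdBasis_diag (m : ℕ) :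
    ∑ k : Fin m, Matrix.single k k (1 : ℂ) = 1 := by
  ext i j
  simp only [Matrix.sum_apply, Matrix.single, Matrix.of_apply, Matrix.one_apply]
  by_cases h : i = j
  · subst h
    simp
  · rw [Finset.sum_eq_zero, if_neg h]
    intro x _
    rw [if_neg]
    rintro ⟨rfl, rfl⟩
    exact h rfl

lemma std_mul_mul {m : ℕ} (k l : Fin m) (τ : Matrix (Fin m) (Fin m) ℂ) :
    Matrix.single k l 1 * τ * Matrix.single l k 1
      = Matrix.single k k (τ l l) := by
  ext a b
  simp only [Matrix.mul_apply, Matrix.single, Matrix.of_apply]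
  by_cases hak : a = k
  · subst hak
    by_cases hbk : b = a
    · subst hbk
      simp [Finset.sum_ite_eq, ite_and, Finset.mul_sum, Finset.sum_mul]
    · simp [ite_and, hbk, Ne.symm hbk]
  · simp [ite_and, hak, Ne.symm hak]

lemma stdBasis_conjTranspose {m : ℕ} (k l : Fin m) :
    (Matrix.single k l (1 : ℂ))ᴴ = Matrix.single l k 1 := by
  ext a b
  simp only [Matrix.conjTranspose_apply, Matrix.single, Matrix.of_apply]
  by_cases h : l = a ∧ k = b
  · simp [h.1, h.2, and_comm]
  · rw [if_neg, if_neg h]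
    · simp
    · rw [and_comm] at h
      exact h

lemma kron_conjTranspose {a b : ℕ} (A : Matrix (Fin a) (Fin a) ℂ)
    (B : Matrix (Fin b) (Fin b) ℂ) : (A ⊗ₖ B)ᴴ = Aᴴ ⊗ₖ Bᴴ := by
  ext i j
  simp [Matrix.conjTranspose_apply]

lemma sum_kron {a b : ℕ} {ι : Type*} (s : Finset ι) (f : ι → Matrix (Fin a) (Fin a) ℂ)
    (B : Matrix (Fin b) (Fin b) ℂ) :
    (∑ i ∈ s, f i) ⊗ₖ B = ∑ i ∈ s, f i ⊗ₖ B := by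
  ext i j
  simp [Matrix.sum_apply, Finset.sum_mul]

lemma trace_stdBasis {m : ℕ} (k : Fin m) (c : ℂ) :
    (Matrix.single k k c).trace = c := by
  simp [Matrix.trace, Matrix.diag, Matrix.single]

def ptA {m n : ℕ} (M : Matrix (Fin m × Fin n) (Fin m × Fin n) ℂ) :
    Matrix (Fin n) (Fin n) ℂ :=
  Matrix.of fun i j => ∑ a : Fin m, M (a, i) (a, j)

lemma ptA_add {m n : ℕ} (M N : Matrix (Fin m × Fin n) (Fin m × Fin n) ℂ) :
    ptA (M + N) = ptA M + ptA N := by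
  ext i j
  simp [ptA, Finset.sum_add_distrib]

lemma ptA_kron {m n : ℕ} (τ : Matrix (Fin m) (Fin m) ℂ) (σ : Matrix (Fin n) (Fin n) ℂ) :
    ptA (τ ⊗ₖ σ) = τ.trace • σ := by
  ext i j
  simp [ptA, Matrix.trace, Matrix.diag, Finset.sum_mul]

/-- If `T` is linear, trace preserving on operators supported on `H^A ⊗ H^B`, and maps each
`1^A ⊗ σ^B` to some `τ^A ⊗ σ^B`, then composing with the quantum operation `Γ'` with Kraus
operators `{(1/√m) P_{kl}} ∪ {P_𝔄^⊥}` gives `(Γ' ∘ T)(1^A ⊗ σ^B) = 1^A ⊗ σ^B`. -/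
theorem gamma_prime_correction {m n p : ℕ}
    (T : Matrix (HIdx m n p) (HIdx m n p) ℂ →ₗ[ℂ] Matrix (HIdx m n p) (HIdx m n p) ℂ)
    (hTtrace : ∀ σ : Matrix (HIdx m n p) (HIdx m n p) ℂ,
      σ = PA m n p * σ * PA m n p → (T σ).trace = σ.trace)
    (hT : ∀ σB : Matrix (Fin n) (Fin n) ℂ, ∃ τA : Matrix (Fin m) (Fin m) ℂ,
      T (embed ((1 : Matrix (Fin m) (Fin m) ℂ) ⊗ₖ σB)) = embed (τA ⊗ₖ σB)) :
    ∀ σB : Matrix (Fin n) (Fin n) ℂ,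
      (∑ k : Fin m, ∑ l : Fin m,
          ((((Real.sqrt m : ℝ) : ℂ))⁻¹ • Pmu n p k l) *
            T (embed ((1 : Matrix (Fin m) (Fin m) ℂ) ⊗ₖ σB)) *
            ((((Real.sqrt m : ℝ) : ℂ))⁻¹ • Pmu n p k l)ᴴ) +
        PAperp m n p * T (embed ((1 : Matrix (Fin m) (Fin m) ℂ) ⊗ₖ σB)) *
          (PAperp m n p)ᴴ =
      embed ((1 : Matrix (Fin m) (Fin m) ℂ) ⊗ₖ σB) := by
  intro σB
  -- trivial cases where the A⊗B block is empty
  by_cases hm : m = 0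
  · subst hm
    rw [show (embed ((1 : Matrix (Fin 0) (Fin 0) ℂ) ⊗ₖ σB) : Matrix (HIdx 0 n p) _ _) = 0
        from embed_of_empty _]
    rw [map_zero]
    ext (i | i) (j | j) <;> simp
  by_cases hn : n = 0
  · subst hn
    rw [show (embed ((1 : Matrix (Fin m) (Fin m) ℂ) ⊗ₖ σB) : Matrix (HIdx m 0 p) _ _) = 0
        from embed_of_empty _]
    rw [map_zero]
    ext (i | i) (j | j) <;> simp
  have hm' : (0 : ℕ) < m := Nat.pos_of_ne_zero hm
  have hn' : (0 : ℕ) < n := Nat.pos_of_ne_zero hn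
  -- trace relation
  have htr : ∀ (σ : Matrix (Fin n) (Fin n) ℂ) (τ : Matrix (Fin m) (Fin m) ℂ),
      T (embed ((1 : Matrix (Fin m) (Fin m) ℂ) ⊗ₖ σ)) = embed (τ ⊗ₖ σ) →
      τ.trace * σ.trace = (m : ℂ) * σ.trace := by
    intro σ τ h
    have h1 := hTtrace (embed ((1 : Matrix (Fin m) (Fin m) ℂ) ⊗ₖ σ))
      (by rw [PA, embed_mul, embed_mul, one_mul, mul_one])
    rw [h, trace_embed, trace_embed, Matrix.trace_kronecker, Matrix.trace_kronecker,
      Matrix.trace_one] at h1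
    simpa using h1
  -- key scalar relation : τ.trace • σ = m • σ
  have hkey : ∀ (σ : Matrix (Fin n) (Fin n) ℂ) (τ : Matrix (Fin m) (Fin m) ℂ),
      T (embed ((1 : Matrix (Fin m) (Fin m) ℂ) ⊗ₖ σ)) = embed (τ ⊗ₖ σ) →
      τ.trace • σ = (m : ℂ) • σ := by
    intro σ τ h
    by_cases h0 : σ.trace = 0
    · set E : Matrix (Fin n) (Fin n) ℂ := Matrix.single ⟨0, hn'⟩ ⟨0, hn'⟩ 1 with hE
      have hEtr : E.trace = 1 := trace_stdBasis _ _
      obtain ⟨τ', hτ'⟩ := hT E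
      obtain ⟨τ'', hτ''⟩ := hT (σ + E)
      have hsum : embed (τ'' ⊗ₖ (σ + E)) =
          (embed (τ ⊗ₖ σ) + embed (τ' ⊗ₖ E) : Matrix (HIdx m n p) _ _) := by
        rw [← hτ'', ← hτ', ← h, ← map_add]
        congr 1
        rw [← embed_add, ← Matrix.kronecker_add]
      rw [← embed_add] at hsum
      have hK := embed_inj hsum
      have hP := congrArg ptA hK
      rw [ptA_add, ptA_kron, ptA_kron, ptA_kron] at hP
      have hτ'tr : τ'.trace = (m : ℂ) := by
        have := htr E τ' hτ'
        rw [hEtr, mul_one, mul_one] at this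
        exact this
      have hτ''tr : τ''.trace = (m : ℂ) := by
        have := htr (σ + E) τ'' hτ''
        rw [Matrix.trace_add, h0, hEtr, zero_add, mul_one, mul_one] at this
        exact this
      rw [hτ'tr, hτ''tr, smul_add] at hP
      have := add_right_cancel hP
      exact this.symm
    · have h1 := htr σ τ h
      rw [mul_right_cancel₀ h0 h1]
  obtain ⟨τ, hτ⟩ := hT σB
  set c : ℂ := (((Real.sqrt m : ℝ) : ℂ))⁻¹ with hc
  have hstarc : star c = c := by
    rw [hc]
    simp [← Complex.ofReal_inv]
  have hcc : c * c = (m : ℂ)⁻¹ := by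
    rw [hc, ← mul_inv, ← Complex.ofReal_mul, Real.mul_self_sqrt (Nat.cast_nonneg m)]
    norm_num
  have hterm : ∀ k l : Fin m,
      (c • Pmu n p k l) * embed (τ ⊗ₖ σB) * (c • Pmu n p k l)ᴴ =
      ((m : ℂ)⁻¹ * τ l l) • embed (Matrix.single k k (1 : ℂ) ⊗ₖ σB) := by
    intro k l
    have hPc : (Pmu n p k l)ᴴ = Pmu n p l k := by
      rw [Pmu, embed_conjTranspose, kron_conjTranspose, stdBasis_conjTranspose,
        Matrix.conjTranspose_one, Pmu]
    rw [Matrix.conjTranspose_smul, hstarc, hPc, smul_mul_assoc, smul_mul_assoc,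
      mul_smul_comm, Pmu, Pmu, embed_mul, embed_mul, ← Matrix.mul_kronecker_mul,
      ← Matrix.mul_kronecker_mul, std_mul_mul, one_mul, mul_one,
      show Matrix.single k k (τ l l) = τ l l • Matrix.single k k (1 : ℂ) by
        rw [Matrix.smul_single, smul_eq_mul, mul_one],
      Matrix.smul_kronecker, embed_smul, smul_smul, smul_smul, hcc]
  calc (∑ k : Fin m, ∑ l : Fin m,
          (c • Pmu n p k l) * T (embed ((1 : Matrix (Fin m) (Fin m) ℂ) ⊗ₖ σB)) *
            (c • Pmu n p k l)ᴴ) +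
        PAperp m n p * T (embed ((1 : Matrix (Fin m) (Fin m) ℂ) ⊗ₖ σB)) * (PAperp m n p)ᴴ
      = (∑ k : Fin m, ∑ l : Fin m,
          ((m : ℂ)⁻¹ * τ l l) • embed (Matrix.single k k (1 : ℂ) ⊗ₖ σB)) + 0 := by
        rw [hτ]
        congr 1
        · exact Finset.sum_congr rfl fun k _ => Finset.sum_congr rfl fun l _ => hterm k l
        · rw [PAperp_mul_embed, zero_mul]
    _ = ((m : ℂ)⁻¹ * τ.trace) • embed ((1 : Matrix (Fin m) (Fin m) ℂ) ⊗ₖ σB) := by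
        rw [add_zero]
        have : ∀ k : Fin m, (∑ l : Fin m,
            ((m : ℂ)⁻¹ * τ l l) • embed (Matrix.single k k (1 : ℂ) ⊗ₖ σB)
              : Matrix (HIdx m n p) _ _) =
            ((m : ℂ)⁻¹ * τ.trace) • embed (Matrix.single k k (1 : ℂ) ⊗ₖ σB) := by
          intro k
          rw [← Finset.sum_smul, ← Finset.mul_sum]
          rfl
        rw [Finset.sum_congr rfl fun k _ => this k, ← Finset.smul_sum, ← embed_sum,
          ← sum_kron, sum_stdBasis_diag]
    _ = embed ((1 : Matrix (Fin m) (Fin m) ℂ) ⊗ₖ σB) := by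
        have hk := hkey σB τ hτ
        have : τ.trace • (embed ((1 : Matrix (Fin m) (Fin m) ℂ) ⊗ₖ σB)
            : Matrix (HIdx m n p) _ _) =
            (m : ℂ) • embed ((1 : Matrix (Fin m) (Fin m) ℂ) ⊗ₖ σB) := by
          rw [← embed_smul, ← embed_smul, ← Matrix.kronecker_smul, ← Matrix.kronecker_smul, hk]
        rw [mul_smul, this, smul_smul, inv_mul_cancel₀ (by exact_mod_cast hm), one_smul]
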